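/- Let U be a unary update procedure and define s₀ = λx.0 and s_{i+1} = s_i ⊕ U(s_i). Then the sequence (s_i) is a weakly increasing chain: i ≤ j implies s_i ≤ s_j, where f ≤ g means that f n ≠ 0 implies f n = g n for every n (Learning Processes from Unary Update Procedures). -/
import Mathlib


/-- The pointwise information order on functions. -/
def FnLe (f g : ℕ → ℕ) : Prop := ∀ n, f n ≠ 0 → f n = g n

/-- Controlled update of a single function: `(f ⊕ (n,m)) x = m` if `x = n`,
`f x` otherwise; `f ⊕ ∅ = f`. -/
def oplus1 (f : ℕ → ℕ) : Option (ℕ × ℕ) → ℕ → ℕ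
  | none => f
  | some (n, m) => fun x => if x = n then m else f x

/-- The learning process generated by a unary update procedure `U`:
`s 0 = λx.0`, `s (i+1) = s i ⊕ U (s i)`. -/
def learnProc1 (U : (ℕ → ℕ) → Option (ℕ × ℕ)) : ℕ → ℕ → ℕ
  | 0 => fun _ => 0
  | i + 1 => oplus1 (learnProc1 U i) (U (learnProc1 U i))

/-- Invariant: any nonzero value in the learning process was set by an update. -/
lemma learnProc1_nonzero_from_update (U : (ℕ → ℕ) → Option (ℕ × ℕ)) :
    ∀ i n, learnProc1 U i n ≠ 0 → ∃ f : ℕ → ℕ, U f = some (n, learnProc1 U i n) := by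
  intro i
  induction i with
  | zero => intro n h; exact absurd rfl h
  | succ i ih =>
    intro n h
    cases hU : U (learnProc1 U i) with
    | none =>
      simp only [learnProc1, hU, oplus1] at h ⊢
      exact ih n h
    | some p =>
      obtain ⟨a, b⟩ := p
      simp only [learnProc1, hU, oplus1] at h ⊢
      by_cases hn : n = a
      · subst hn
        simp only [if_pos rfl] at h ⊢
        exact ⟨learnProc1 U i, hU⟩
      · simp only [if_neg hn] at h ⊢
        exact ih n h

/-- Learning Processes from Unary Update Procedures: the learning process
generated by a unary update procedure is a weakly increasing chain. -/
theorem learning_process_weakly_increasing (U : (ℕ → ℕ) → Option (ℕ × ℕ))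
    -- continuity
    (hcont : ∀ f : ℕ → ℕ, ∃ A : Finset ℕ,
      ∀ g : ℕ → ℕ, (∀ n ∈ A, g n = f n) → U g = U f)
    -- update condition
    (hupd : ∀ (f g : ℕ → ℕ) (n m h l : ℕ),
      U f = some (n, m) → g n = m → U g = some (h, l) → h ≠ n) :
    ∀ i j : ℕ, i ≤ j → FnLe (learnProc1 U i) (learnProc1 U j) := by
  have step : ∀ i, FnLe (learnProc1 U i) (learnProc1 U (i + 1)) := by
    intro i n hn
    cases hU : U (learnProc1 U i) with
    | none => simp [learnProc1, hU, oplus1]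
    | some p =>
      obtain ⟨a, b⟩ := p
      simp only [learnProc1, hU, oplus1]
      by_cases hna : n = a
      · subst hna
        obtain ⟨f, hf⟩ := learnProc1_nonzero_from_update U i n hn
        exact absurd rfl (hupd f (learnProc1 U i) n _ n b hf rfl hU)
      · simp [hna]
  intro i j hij
  induction hij with
  | refl => intro n _; rfl
  | step h ih =>
    intro n hn
    rw [ih n hn]
    exact step _ n (by rw [← ih n hn]; exact hn)
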